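/- Weight-reduction rounding: let w : E → ℕ be integral edge weights on a finite edge set E, let ε > 0 and β = max{w(e) : e ∈ E}. Define w'(e) = ⌊w(e) · 2|E|/(εβ)⌋. Then (i) max{w'(e) : e ∈ E} ≤ 2|E|/ε, and (ii) for every α ≥ 1 and every multiset J ⊆ E containing each edge at most twice, if w'(J) ≤ α · min{w'(J*) : J* ∈ 𝒮} for a family 𝒮 of feasible solutions with J ∈ 𝒮, then w(J) ≤ α · min{w(J*) : J* ∈ 𝒮} + εβ. -/
import Mathlib


open scoped Classical

noncomputable def deg {V : Type*} (E : Multiset (Sym2 V)) (v : V) : ℕ :=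
  (E.filter (fun e => v ∈ e)).card

def Connects {V : Type*} (E : Multiset (Sym2 V)) : V → V → Prop :=
  Relation.ReflTransGen (fun a b => s(a, b) ∈ E)

noncomputable def mweight {V : Type*} (w : Sym2 V → ℝ) (E : Multiset (Sym2 V)) : ℝ :=
  (E.map w).sum

def IsMetric {V : Type*} (w : Sym2 V → ℝ) : Prop :=
  (∀ e, 0 ≤ w e) ∧ ∀ a b c : V, w s(a, c) ≤ w s(a, b) + w s(b, c)

def IsTour {V : Type*} (D : Finset V) (T : Multiset (Sym2 V)) : Prop :=
  (∀ e ∈ T, ¬ Sym2.IsDiag e) ∧ (∀ v, Even (deg T v)) ∧ ∀ v, ∃ d ∈ D, Connects T v d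

def IsCSF {V : Type*} (D : Finset V) (F : Finset (Sym2 V)) : Prop :=
  (∀ e ∈ F, ¬ Sym2.IsDiag e) ∧
  (SimpleGraph.fromEdgeSet (↑F : Set (Sym2 V))).IsAcyclic ∧
  ∀ v, ∃ d ∈ D, Connects F.val v d

def IsPM {V : Type*} (U : Finset V) (M : Multiset (Sym2 V)) : Prop :=
  (∀ e ∈ M, ¬ Sym2.IsDiag e) ∧ ∀ v, deg M v = if v ∈ U then 1 else 0

def IsRPPSol {V : Type*} (R J : Multiset (Sym2 V)) : Prop :=
  (∀ e ∈ J, ¬ Sym2.IsDiag e) ∧ (∀ v, Even (deg (R + J) v)) ∧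
  ∀ u v : V, (∃ e ∈ R + J, u ∈ e) → (∃ e ∈ R + J, v ∈ e) → Connects (R + J) u v
theorem stmt8 {γ : Type*} [DecidableEq γ] (E : Finset γ) (w : γ → ℕ) (ε : ℝ) (hε : 0 < ε)
    (β : ℕ) (hβ : β = E.sup w)
    (w' : γ → ℕ) (hw' : ∀ e, w' e = ⌊(w e : ℝ) * (2 * E.card) / (ε * β)⌋₊)
    (S : Set (Multiset γ))
    (hS : ∀ J ∈ S, (∀ x ∈ J, x ∈ E) ∧ ∀ x, Multiset.count x J ≤ 2)
    (a : ℝ) (ha : 1 ≤ a)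
    (J : Multiset γ) (hJ : J ∈ S)
    (hmin : ∀ K ∈ S, ((J.map w').sum : ℝ) ≤ a * ((K.map w').sum : ℕ)) :
    (∀ e ∈ E, (w' e : ℝ) ≤ 2 * E.card / ε) ∧
    ∀ K ∈ S, ((J.map w).sum : ℝ) ≤ a * ((K.map w).sum : ℕ) + ε * β := by

  classical
  have ha0 : (0:ℝ) ≤ a := le_trans zero_le_one ha
  have cast_sum : ∀ (f : γ → ℕ) (M : Multiset γ),
      ((M.map f).sum : ℝ) = (M.map (fun e => (f e : ℝ))).sum := by
    intro f M
    rw [Nat.cast_multiset_sum, Multiset.map_map]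
    rfl
  constructor
  · intro e he
    rw [hw' e]
    rcases Nat.eq_zero_or_pos β with h0 | hpos
    · simp [h0]
      positivity
    · have hwe : (w e : ℝ) ≤ β := by exact_mod_cast hβ ▸ Finset.le_sup he
      have hβR : (0:ℝ) < β := by exact_mod_cast hpos
      have h1 : (w e:ℝ) * (2*E.card) / (ε*β) ≤ 2*E.card/ε := by
        rw [div_le_div_iff₀ (by positivity) hε]
        have hc0 : (0:ℝ) ≤ 2 * E.card := by positivity
        nlinarith [mul_le_mul_of_nonneg_right (mul_le_mul_of_nonneg_right hwe hc0) hε.le]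
      calc (⌊(w e : ℝ) * (2 * E.card) / (ε * β)⌋₊ : ℝ)
          ≤ (w e : ℝ) * (2 * E.card) / (ε * β) := Nat.floor_le (by positivity)
        _ ≤ 2*E.card/ε := h1
  · intro K hK
    rcases Nat.eq_zero_or_pos E.card with hE0 | hEpos
    · have hJ0 : J = 0 := Multiset.eq_zero_of_forall_notMem fun x hx => by
        have := (hS J hJ).1 x hx
        rw [Finset.card_eq_zero.mp hE0] at this
        simp at this
      have : (0:ℝ) ≤ a * ((K.map w).sum : ℕ) + ε * β := by positivity
      simpa [hJ0] using this
    rcases Nat.eq_zero_or_pos β with hβ0 | hβpos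
    · have hw0 : ∀ x ∈ J, w x = 0 := by
        intro x hx
        have h := Finset.le_sup (f := w) ((hS J hJ).1 x hx)
        rw [← hβ, hβ0] at h
        omega
      have hz : (J.map w).sum = 0 := by
        apply Multiset.sum_eq_zero
        intro x hx
        obtain ⟨y, hy, rfl⟩ := Multiset.mem_map.mp hx
        exact hw0 y hy
      rw [hz]
      have : (0:ℝ) ≤ a * ((K.map w).sum : ℕ) + ε * β := by positivity
      simpa using this
    set c : ℝ := ε * β / (2 * E.card) with hc
    have hβR : (0:ℝ) < β := by exact_mod_cast hβpos
    have hER : (0:ℝ) < E.card := by exact_mod_cast hEpos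
    have hc0 : 0 < c := by positivity
    have key : ∀ e ∈ E, c * w' e ≤ w e ∧ (w e:ℝ) ≤ c * w' e + c := by
      intro e _
      have hx : (w e:ℝ) * (2*E.card) / (ε*β) = (w e:ℝ) / c := by
        rw [hc]; field_simp
      rw [hw' e, hx]
      constructor
      · have := Nat.floor_le (a := (w e:ℝ)/c) (by positivity)
        calc c * ⌊(w e:ℝ)/c⌋₊ ≤ c * ((w e:ℝ)/c) := by
              exact mul_le_mul_of_nonneg_left this hc0.le
          _ = w e := by field_simp
      · have h4 := mul_lt_mul_of_pos_right (Nat.lt_floor_add_one ((w e:ℝ)/c)) hc0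
        rw [div_mul_cancel₀ _ hc0.ne'] at h4
        nlinarith [h4]
    have hK1 : c * ((K.map w').sum:ℝ) ≤ ((K.map w).sum:ℝ) := by
      rw [cast_sum, cast_sum, ← Multiset.sum_map_mul_left]
      apply Multiset.sum_map_le_sum_map
      intro e he
      exact (key e ((hS K hK).1 e he)).1
    have hJ1 : ((J.map w).sum:ℝ) ≤ c * ((J.map w').sum:ℝ) + c * J.card := by
      rw [cast_sum, cast_sum, ← Multiset.sum_map_mul_left]
      have : c * (J.card:ℝ) = (J.map (fun _ => c)).sum := by
        simp [Multiset.map_const', Multiset.sum_replicate, nsmul_eq_mul, mul_comm]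
      rw [this, ← Multiset.sum_map_add]
      apply Multiset.sum_map_le_sum_map
      intro e he
      exact (key e ((hS J hJ).1 e he)).2
    have hJcard : (J.card:ℝ) ≤ 2 * E.card := by
      have hsub : J.toFinset ⊆ E := fun x hx => (hS J hJ).1 x (Multiset.mem_toFinset.mp hx)
      have : J.card ≤ 2 * E.card := by
        calc J.card = ∑ x ∈ J.toFinset, J.count x := (Multiset.toFinset_sum_count_eq J).symm
          _ ≤ ∑ _x ∈ J.toFinset, 2 := Finset.sum_le_sum (fun x _ => (hS J hJ).2 x)
          _ = 2 * J.toFinset.card := by rw [Finset.sum_const]; ring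
          _ ≤ 2 * E.card := by
              have := Finset.card_le_card hsub
              omega
      exact_mod_cast this
    have hceq : c * (2 * E.card) = ε * β := by
      rw [hc]; field_simp
    have hminK := hmin K hK
    nlinarith [mul_le_mul_of_nonneg_left hminK hc0.le,
      mul_le_mul_of_nonneg_left hK1 ha0,
      mul_le_mul_of_nonneg_left hJcard hc0.le]
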